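/- 𝒵·(𝔗 − D⁻¹ + I) = I − 𝒥. -/

import Mathlib

open Matrix Finset Filter Topology

/-- The all-ones n×n matrix `J = e eᵀ`. -/
noncomputable def Jmat (n : ℕ) : Matrix (Fin n) (Fin n) ℝ :=
  Matrix.of fun _ _ => (1 : ℝ)

/-- `Π^{1/2}`: the diagonal matrix with entries `√(π_i)`. -/
noncomputable def Pih (n : ℕ) (pv : Fin n → ℝ) : Matrix (Fin n) (Fin n) ℝ :=
  Matrix.diagonal fun i => Real.sqrt (pv i)

/-- `Π^{-1/2}`: the diagonal matrix with entries `1/√(π_i)`. -/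
noncomputable def Pinvh (n : ℕ) (pv : Fin n → ℝ) : Matrix (Fin n) (Fin n) ℝ :=
  Matrix.diagonal fun i => (Real.sqrt (pv i))⁻¹

/-- `𝒵·(𝔗 − D⁻¹ + I) = I − 𝒥`. -/
theorem Zc_mul_frakT_shift {n : ℕ} (hn : 1 ≤ n)
    (P : Matrix (Fin n) (Fin n) ℝ)
    (hP_nonneg : ∀ i j, 0 ≤ P i j) (hP_row : ∀ i, ∑ j, P i j = 1)
    (pv : Fin n → ℝ) (hpv_pos : ∀ i, 0 < pv i) (hpv_sum : ∑ i, pv i = 1)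
    (hpv_stat : Matrix.vecMul pv P = pv)
    (hM : IsUnit (1 - P + Jmat n * Matrix.diagonal pv))
    (d : Fin n → ℝ) (hd_pos : ∀ i, 0 < d i) :
    let Z := (1 - P + Jmat n * Matrix.diagonal pv)⁻¹ - Jmat n * Matrix.diagonal pv
    let Dinv := (Matrix.diagonal d)⁻¹
    let T := Pih n pv * (Dinv - P) * Pinvh n pv
    let Zc := Pih n pv * Z * Pinvh n pv
    let Jc := Pih n pv * Jmat n * Pih n pv
    Zc * (T - Dinv + 1) = 1 - Jc := by
  intro Z Dinv T Zc Jc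
  have hsq : ∀ i, Real.sqrt (pv i) ≠ 0 := fun i =>
    ne_of_gt (Real.sqrt_pos.mpr (hpv_pos i))
  set K := Jmat n * Matrix.diagonal pv with hK
  have hKentry : ∀ i j, K i j = pv j := by
    intro i j
    simp [hK, Jmat, Matrix.mul_apply, Matrix.diagonal_apply, Finset.sum_ite_eq]
  have hKP : K * P = K := by
    ext i j
    rw [Matrix.mul_apply, hKentry]
    calc ∑ k, K i k * P k j = ∑ k, pv k * P k j := by
          refine Finset.sum_congr rfl fun k _ => by rw [hKentry]
      _ = Matrix.vecMul pv P j := by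
          rw [Matrix.vecMul, dotProduct]
      _ = pv j := by rw [hpv_stat]
  have hPK : P * K = K := by
    ext i j
    rw [Matrix.mul_apply, hKentry]
    calc ∑ k, P i k * K k j = ∑ k, P i k * pv j := by
          refine Finset.sum_congr rfl fun k _ => by rw [hKentry]
      _ = pv j := by rw [← Finset.sum_mul, hP_row, one_mul]
  have hKK : K * K = K := by
    ext i j
    rw [Matrix.mul_apply, hKentry]
    calc ∑ k, K i k * K k j = ∑ k, pv k * pv j := by
          refine Finset.sum_congr rfl fun k _ => by rw [hKentry, hKentry]
      _ = pv j := by rw [← Finset.sum_mul, hpv_sum, one_mul]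
  have hMK : (1 - P + K) * K = K := by
    rw [add_mul, sub_mul, one_mul, hPK, hKK, sub_self, zero_add]
  have hMinv : (1 - P + K)⁻¹ * (1 - P + K) = 1 :=
    Matrix.nonsing_inv_mul _ ((Matrix.isUnit_iff_isUnit_det _).mp hM)
  have hMinvK : (1 - P + K)⁻¹ * K = K := by
    calc (1 - P + K)⁻¹ * K = (1 - P + K)⁻¹ * ((1 - P + K) * K) := by rw [hMK]
      _ = K := by rw [← Matrix.mul_assoc, hMinv, one_mul]
  have hK1P : K * (1 - P) = 0 := by
    rw [Matrix.mul_sub, Matrix.mul_one, hKP, sub_self]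
  have hM1P : (1 - P + K)⁻¹ * (1 - P) = 1 - K := by
    calc (1 - P + K)⁻¹ * (1 - P)
        = (1 - P + K)⁻¹ * (1 - P + K) - (1 - P + K)⁻¹ * K := by
          rw [← Matrix.mul_sub]; congr 1; abel
      _ = 1 - K := by rw [hMinv, hMinvK]
  have hZ1P : Z * (1 - P) = 1 - K := by
    show ((1 - P + K)⁻¹ - K) * (1 - P) = 1 - K
    rw [sub_mul, hM1P, hK1P, sub_zero]
  have hinvPih : Pinvh n pv * Pih n pv = 1 := by
    rw [Pinvh, Pih, Matrix.diagonal_mul_diagonal]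
    rw [show (fun i => (Real.sqrt (pv i))⁻¹ * Real.sqrt (pv i)) = fun _ => (1:ℝ) from
      funext fun i => inv_mul_cancel₀ (hsq i)]
    exact Matrix.diagonal_one
  have hPihinv : Pih n pv * Pinvh n pv = 1 := by
    rw [Pinvh, Pih, Matrix.diagonal_mul_diagonal]
    rw [show (fun i => Real.sqrt (pv i) * (Real.sqrt (pv i))⁻¹) = fun _ => (1:ℝ) from
      funext fun i => mul_inv_cancel₀ (hsq i)]
    exact Matrix.diagonal_one
  have hDinv : Dinv = Matrix.diagonal fun i => (d i)⁻¹ := by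
    refine Matrix.inv_eq_right_inv ?_
    rw [Matrix.diagonal_mul_diagonal]
    rw [show (fun i => d i * (d i)⁻¹) = fun _ => (1:ℝ) from
      funext fun i => mul_inv_cancel₀ (ne_of_gt (hd_pos i))]
    exact Matrix.diagonal_one
  have hPDP : Pih n pv * Dinv * Pinvh n pv = Dinv := by
    rw [hDinv, Pih, Pinvh, Matrix.diagonal_mul_diagonal, Matrix.diagonal_mul_diagonal]
    exact congrArg Matrix.diagonal (funext fun i => by
      rw [mul_comm (Real.sqrt (pv i)) ((d i)⁻¹), mul_assoc, mul_inv_cancel₀ (hsq i),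
        mul_one])
  have hPiPinvh : Matrix.diagonal pv * Pinvh n pv = Pih n pv := by
    rw [Pinvh, Pih, Matrix.diagonal_mul_diagonal]
    refine congrArg Matrix.diagonal (funext fun i => ?_)
    field_simp
    rw [div_eq_iff (hsq i), Real.mul_self_sqrt (le_of_lt (hpv_pos i))]
  have hT1 : T - Dinv + 1 = Pih n pv * (1 - P) * Pinvh n pv := by
    show Pih n pv * (Dinv - P) * Pinvh n pv - Dinv + 1 = _
    rw [Matrix.mul_sub (Pih n pv), Matrix.sub_mul, hPDP,
      Matrix.mul_sub (Pih n pv) 1 P, Matrix.mul_one, Matrix.sub_mul, hPihinv]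
    abel
  have hKPinvh : K * Pinvh n pv = Jmat n * Pih n pv := by
    rw [hK, Matrix.mul_assoc, hPiPinvh]
  calc Zc * (T - Dinv + 1)
      = Pih n pv * Z * Pinvh n pv * (Pih n pv * (1 - P) * Pinvh n pv) := by rw [hT1]
    _ = Pih n pv * (Z * (1 - P)) * Pinvh n pv := by
        rw [Matrix.mul_assoc (Pih n pv * Z) (Pinvh n pv),
          ← Matrix.mul_assoc (Pinvh n pv), ← Matrix.mul_assoc (Pinvh n pv),
          hinvPih, one_mul, ← Matrix.mul_assoc, ← Matrix.mul_assoc]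
    _ = Pih n pv * (1 - K) * Pinvh n pv := by rw [hZ1P]
    _ = 1 - Jc := by
        rw [Matrix.mul_sub, Matrix.mul_one, Matrix.sub_mul, hPihinv,
          Matrix.mul_assoc, hKPinvh]
        show _ = 1 - Pih n pv * Jmat n * Pih n pv
        rw [Matrix.mul_assoc]
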